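/- If the singular values satisfy the geometric decay σ_j = c ρ^{-j} with ρ > 1 (i.e. severely ill-posed with rate ρ = e^{α}), then for every i₀ ≤ k, |L_{i₀}(0)| = ∏_{j=1,j≠i₀}^{k} σ_j²/|σ_j² − σ_{i₀}²| is bounded above by ∏_{j=1}^{∞} 1/(1 − ρ^{-2j})², a finite constant independent of k. -/

import Mathlib

/-- for geometrically decaying singular values `σ_j = c ρ^{-j}` (ρ > 1),
for every `1 ≤ i₀ ≤ k`, the Lagrange value
`|L_{i₀}(0)| = ∏_{j=1,j≠i₀}^{k} σ_j²/|σ_j² − σ_{i₀}²|` is bounded above by the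
finite constant `∏_{j=1}^{∞} (1/(1 − ρ^{-2j}))²`, independent of `k`. -/
theorem lagrange_at_zero_bounded_geometric (c ρ : ℝ) (hc : 0 < c) (hρ : 1 < ρ)
    (σ : ℕ → ℝ) (hσ : ∀ j, σ j = c * ρ⁻¹ ^ j)
    (k i₀ : ℕ) (hi₀ : 1 ≤ i₀) (hik : i₀ ≤ k) :
    (∏ j ∈ (Finset.Icc 1 k).erase i₀, σ j ^ 2 / |σ j ^ 2 - σ i₀ ^ 2|) ≤
      ∏' j : ℕ, ((1 - ρ⁻¹ ^ (2 * (j + 1)))⁻¹) ^ 2 := by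
  have hρ0 : 0 < ρ := lt_trans one_pos hρ
  set q : ℝ := ρ⁻¹ ^ 2 with hqdef
  have hq0 : 0 < q := by positivity
  have hq1 : q < 1 := by
    have h1 : ρ⁻¹ < 1 := inv_lt_one_of_one_lt₀ hρ
    exact pow_lt_one₀ (by positivity) h1 two_ne_zero
  have hqm1 : ∀ m : ℕ, 1 ≤ m → q ^ m < 1 := fun m hm =>
    pow_lt_one₀ hq0.le hq1 (by omega)
  have hden : ∀ m : ℕ, 1 ≤ m → 0 < 1 - q ^ m := fun m hm => by
    have := hqm1 m hm; linarith
  set g : ℕ → ℝ := fun m => (1 - q ^ m)⁻¹ with hgdef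
  have hg1 : ∀ m : ℕ, 1 ≤ m → 1 ≤ g m := fun m hm =>
    (one_le_inv₀ (hden m hm)).mpr (by have := pow_pos hq0 m; linarith)
  -- σ j ^ 2 = c^2 * q^j
  have hs : ∀ j, σ j ^ 2 = c ^ 2 * q ^ j := fun j => by
    rw [hσ j, mul_pow, hqdef, ← pow_mul, ← pow_mul, Nat.mul_comm]
  -- per-term bound
  have hterm : ∀ j ∈ (Finset.Icc 1 k).erase i₀,
      σ j ^ 2 / |σ j ^ 2 - σ i₀ ^ 2| ≤ g (if j < i₀ then i₀ - j else j - i₀) := by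
    intro j hj
    simp only [Finset.mem_erase, Finset.mem_Icc] at hj
    obtain ⟨hne, hj1, hjk⟩ := hj
    rw [hs, hs]
    rcases lt_or_gt_of_ne hne with hlt | hgt
    · -- j < i₀ : exact equality with g (i₀ - j)
      have hm : 1 ≤ i₀ - j := by omega
      have hpow : q ^ i₀ = q ^ j * q ^ (i₀ - j) := by
        rw [← pow_add]; congr 1; omega
      have hd := hden _ hm
      have habs : |c ^ 2 * q ^ j - c ^ 2 * q ^ i₀| = c ^ 2 * q ^ j * (1 - q ^ (i₀ - j)) := by
        rw [abs_of_pos]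
        · rw [hpow]; ring
        · rw [hpow]
          have : 0 < c ^ 2 * q ^ j := by positivity
          nlinarith
      rw [if_pos hlt, habs]
      show _ ≤ (1 - q ^ (i₀ - j))⁻¹
      have hcq : c ^ 2 * q ^ j ≠ 0 := by positivity
      rw [div_mul_eq_div_div, div_self hcq, one_div]
    · -- j > i₀
      have hm : 1 ≤ j - i₀ := by omega
      have hpow : q ^ j = q ^ i₀ * q ^ (j - i₀) := by
        rw [← pow_add]; congr 1; omega
      have hd := hden _ hm
      have habs : |c ^ 2 * q ^ j - c ^ 2 * q ^ i₀| = c ^ 2 * q ^ i₀ * (1 - q ^ (j - i₀)) := by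
        rw [abs_of_neg]
        · rw [hpow]; ring
        · rw [hpow]
          have : 0 < c ^ 2 * q ^ i₀ := by positivity
          nlinarith
      rw [if_neg (by omega), habs]
      show _ ≤ (1 - q ^ (j - i₀))⁻¹
      have hcq : c ^ 2 * q ^ i₀ ≠ 0 := by positivity
      rw [hpow, ← mul_assoc, mul_div_mul_left _ _ hcq, ← one_div]
      exact (div_le_div_iff_of_pos_right hd).mpr (hqm1 _ hm).le
  -- notation for the distance function
  set G : ℕ → ℝ := fun j => g (if j < i₀ then i₀ - j else j - i₀) with hGdef
  have h1 : (∏ j ∈ (Finset.Icc 1 k).erase i₀, σ j ^ 2 / |σ j ^ 2 - σ i₀ ^ 2|) ≤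
      ∏ j ∈ (Finset.Icc 1 k).erase i₀, G j :=
    Finset.prod_le_prod (fun j _ => div_nonneg (sq_nonneg _) (abs_nonneg _)) hterm
  -- split the erased interval
  have hsplit : (Finset.Icc 1 k).erase i₀ = Finset.Icc 1 (i₀ - 1) ∪ Finset.Icc (i₀ + 1) k := by
    ext j
    simp only [Finset.mem_erase, Finset.mem_Icc, Finset.mem_union]
    omega
  have hdisj : Disjoint (Finset.Icc 1 (i₀ - 1)) (Finset.Icc (i₀ + 1) k) := by
    rw [Finset.disjoint_left]
    intro a ha hb
    simp only [Finset.mem_Icc] at ha hb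
    omega
  have h2 : ∏ j ∈ (Finset.Icc 1 k).erase i₀, G j =
      (∏ j ∈ Finset.Icc 1 (i₀ - 1), G j) * ∏ j ∈ Finset.Icc (i₀ + 1) k, G j := by
    rw [hsplit, Finset.prod_union hdisj]
  -- left part
  have hA : ∏ j ∈ Finset.Icc 1 (i₀ - 1), G j = ∏ m ∈ Finset.Icc 1 (i₀ - 1), g m := by
    apply Finset.prod_nbij' (fun j => i₀ - j) (fun m => i₀ - m)
    · intro a ha; simp only [Finset.mem_Icc] at *; omega
    · intro a ha; simp only [Finset.mem_Icc] at *; omega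
    · intro a ha; simp only [Finset.mem_Icc] at ha; omega
    · intro a ha; simp only [Finset.mem_Icc] at ha; omega
    · intro a ha
      simp only [Finset.mem_Icc] at ha
      rw [hGdef]
      simp only
      rw [if_pos (by omega)]
  -- right part
  have hB : ∏ j ∈ Finset.Icc (i₀ + 1) k, G j = ∏ m ∈ Finset.Icc 1 (k - i₀), g m := by
    apply Finset.prod_nbij' (fun j => j - i₀) (fun m => m + i₀)
    · intro a ha; simp only [Finset.mem_Icc] at *; omega
    · intro a ha; simp only [Finset.mem_Icc] at *; omega
    · intro a ha; simp only [Finset.mem_Icc] at ha; omega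
    · intro a ha; simp only [Finset.mem_Icc] at ha; omega
    · intro a ha
      simp only [Finset.mem_Icc] at ha
      rw [hGdef]
      simp only
      rw [if_neg (by omega)]
  have hgP : 0 ≤ ∏ m ∈ Finset.Icc 1 k, g m :=
    Finset.prod_nonneg fun m hm => by
      have := hg1 m (Finset.mem_Icc.mp hm).1; linarith
  have hext : ∀ n : ℕ, n ≤ k → ∏ m ∈ Finset.Icc 1 n, g m ≤ ∏ m ∈ Finset.Icc 1 k, g m := by
    intro n hn
    have hsub : Finset.Icc 1 n ⊆ Finset.Icc 1 k := Finset.Icc_subset_Icc le_rfl hn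
    rw [← Finset.prod_sdiff hsub]
    have h1le : (1:ℝ) ≤ ∏ m ∈ Finset.Icc 1 k \ Finset.Icc 1 n, g m := by
      calc (1:ℝ) = ∏ _m ∈ Finset.Icc 1 k \ Finset.Icc 1 n, (1:ℝ) :=
            (Finset.prod_const_one).symm
        _ ≤ ∏ m ∈ Finset.Icc 1 k \ Finset.Icc 1 n, g m :=
            Finset.prod_le_prod (fun _ _ => zero_le_one) (fun m hm =>
              hg1 m (Finset.mem_Icc.mp (Finset.mem_sdiff.mp hm).1).1)
    have hnn : 0 ≤ ∏ m ∈ Finset.Icc 1 n, g m :=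
      Finset.prod_nonneg fun m hm => by
        have := hg1 m (Finset.mem_Icc.mp hm).1; linarith
    exact le_mul_of_one_le_left hnn h1le
  have hAle : ∏ m ∈ Finset.Icc 1 (i₀ - 1), g m ≤ ∏ m ∈ Finset.Icc 1 k, g m :=
    hext _ (by omega)
  have hBle : ∏ m ∈ Finset.Icc 1 (k - i₀), g m ≤ ∏ m ∈ Finset.Icc 1 k, g m :=
    hext _ (by omega)
  have hBnn : 0 ≤ ∏ m ∈ Finset.Icc 1 (k - i₀), g m :=
    Finset.prod_nonneg fun m hm => by
      have := hg1 m (Finset.mem_Icc.mp hm).1; linarith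
  have h3 : ∏ j ∈ (Finset.Icc 1 k).erase i₀, G j ≤ (∏ m ∈ Finset.Icc 1 k, g m) ^ 2 := by
    rw [h2, hA, hB, sq]
    exact mul_le_mul hAle hBle hBnn hgP
  -- rewrite as a product over range k of the tprod terms
  have hFq : ∀ j : ℕ, ((1 - ρ⁻¹ ^ (2 * (j + 1)))⁻¹) ^ 2 = (g (j + 1)) ^ 2 := by
    intro j
    rw [hgdef]
    simp only
    rw [hqdef, ← pow_mul]
  have h4 : (∏ m ∈ Finset.Icc 1 k, g m) ^ 2 =
      ∏ j ∈ Finset.range k, ((1 - ρ⁻¹ ^ (2 * (j + 1)))⁻¹) ^ 2 := by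
    rw [← Finset.prod_pow]
    apply Finset.prod_nbij' (fun m => m - 1) (fun j => j + 1)
    · intro a ha; simp only [Finset.mem_Icc, Finset.mem_range] at *; omega
    · intro a ha; simp only [Finset.mem_Icc, Finset.mem_range] at *; omega
    · intro a ha; simp only [Finset.mem_Icc] at ha; omega
    · intro a ha; omega
    · intro a ha
      simp only [Finset.mem_Icc] at ha
      rw [hFq]
      congr 2
      omega
  -- multipliability of the infinite product
  have hgpos : ∀ j : ℕ, 0 < g (j + 1) := fun j => by
    have := hden (j + 1) (by omega)
    rw [hgdef]
    positivity
  have hlog : Summable (fun j : ℕ => Real.log ((g (j + 1)) ^ 2)) := by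
    have hb : ∀ j : ℕ, Real.log ((g (j + 1)) ^ 2) ≤ 2 * (1 - q)⁻¹ * q * q ^ j := by
      intro j
      have hd1 : 0 < 1 - q ^ (j + 1) := hden _ (by omega)
      have hx0 : (0:ℝ) ≤ q ^ (j + 1) := by positivity
      have hxq : q ^ (j + 1) ≤ q := by
        calc q ^ (j + 1) ≤ q ^ 1 := pow_le_pow_of_le_one hq0.le hq1.le (by omega)
        _ = q := pow_one q
      have hlog2 : Real.log ((g (j + 1)) ^ 2) = 2 * Real.log ((1 - q ^ (j + 1))⁻¹) := by
        rw [hgdef]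
        simp only
        rw [Real.log_pow]
        push_cast; ring
      have hlb : Real.log ((1 - q ^ (j + 1))⁻¹) ≤ (1 - q ^ (j + 1))⁻¹ - 1 :=
        Real.log_le_sub_one_of_pos (by positivity)
      have heq : (1 - q ^ (j + 1))⁻¹ - 1 = q ^ (j + 1) * (1 - q ^ (j + 1))⁻¹ := by
        field_simp
        ring
      have hinv : (1 - q ^ (j + 1))⁻¹ ≤ (1 - q)⁻¹ := by
        apply inv_anti₀ (by linarith) (by linarith)
      have hmul : q ^ (j + 1) * (1 - q ^ (j + 1))⁻¹ ≤ q ^ (j + 1) * (1 - q)⁻¹ :=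
        mul_le_mul_of_nonneg_left hinv hx0
      have hfin : q ^ (j + 1) * (1 - q)⁻¹ = (1 - q)⁻¹ * q * q ^ j := by
        rw [pow_succ]; ring
      rw [hlog2]
      nlinarith [hlb, hmul]
    have hnn : ∀ j : ℕ, 0 ≤ Real.log ((g (j + 1)) ^ 2) := fun j =>
      Real.log_nonneg (one_le_pow₀ (hg1 (j + 1) (by omega)))
    exact Summable.of_nonneg_of_le hnn hb
      (((summable_geometric_of_lt_one hq0.le hq1).mul_left _))
  have hFpos : ∀ j : ℕ, 0 < ((1 - ρ⁻¹ ^ (2 * (j + 1)))⁻¹) ^ 2 := fun j => by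
    rw [hFq]; exact pow_pos (hgpos j) 2
  have hlogF : Summable (fun j : ℕ => Real.log (((1 - ρ⁻¹ ^ (2 * (j + 1)))⁻¹) ^ 2)) := by
    simpa only [hFq] using hlog
  have hlognn : ∀ j : ℕ, 0 ≤ Real.log (((1 - ρ⁻¹ ^ (2 * (j + 1)))⁻¹) ^ 2) := fun j => by
    rw [hFq]
    exact Real.log_nonneg (one_le_pow₀ (hg1 (j + 1) (by omega)))
  have htp : ∏' j : ℕ, ((1 - ρ⁻¹ ^ (2 * (j + 1)))⁻¹) ^ 2 =
      Real.exp (∑' j : ℕ, Real.log (((1 - ρ⁻¹ ^ (2 * (j + 1)))⁻¹) ^ 2)) := by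
    have h := Real.rexp_tsum_eq_tprod hFpos hlogF
    exact h.symm
  have h5 : ∏ j ∈ Finset.range k, ((1 - ρ⁻¹ ^ (2 * (j + 1)))⁻¹) ^ 2 ≤
      ∏' j : ℕ, ((1 - ρ⁻¹ ^ (2 * (j + 1)))⁻¹) ^ 2 := by
    rw [htp]
    have hprod : ∏ j ∈ Finset.range k, ((1 - ρ⁻¹ ^ (2 * (j + 1)))⁻¹) ^ 2 =
        Real.exp (∑ j ∈ Finset.range k, Real.log (((1 - ρ⁻¹ ^ (2 * (j + 1)))⁻¹) ^ 2)) := by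
      rw [Real.exp_sum]
      exact Finset.prod_congr rfl fun j _ => (Real.exp_log (hFpos j)).symm
    rw [hprod]
    exact Real.exp_le_exp.mpr
      (hlogF.sum_le_tsum _ (fun j _ => hlognn j))
  calc (∏ j ∈ (Finset.Icc 1 k).erase i₀, σ j ^ 2 / |σ j ^ 2 - σ i₀ ^ 2|)
      ≤ ∏ j ∈ (Finset.Icc 1 k).erase i₀, G j := h1
    _ ≤ (∏ m ∈ Finset.Icc 1 k, g m) ^ 2 := h3
    _ = ∏ j ∈ Finset.range k, ((1 - ρ⁻¹ ^ (2 * (j + 1)))⁻¹) ^ 2 := h4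
    _ ≤ ∏' j : ℕ, ((1 - ρ⁻¹ ^ (2 * (j + 1)))⁻¹) ^ 2 := h5
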